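/- Let G be a finitely generated group with a recursively enumerable presentation, and suppose G is simple and nontrivial. Then the word problem for G is decidable (Kuznetsov's theorem). -/

import Mathlib

open Encodable FreeGroup
open Nat.Partrec (Code)
open Nat.Partrec.Code

namespace Kuznetsov

variable {α : Type*} [Primcodable α] {k : ℕ}

/-- Existence of a boolean certificate gives an r.e. predicate. -/
theorem rePred_of_exists {β : Type*} [Primcodable β] {f : α → β → Bool}
    (hf : Primrec₂ f) : REPred fun a => ∃ b, f a b = true := by
  have hg : Primrec₂ fun (a : α) (n : ℕ) =>
      ((Encodable.decode (α := β) n).map (f a)).getD false :=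
    Primrec.option_getD.comp
      (Primrec.option_map (Primrec.decode.comp Primrec.snd)
        (hf.comp (Primrec.fst.comp Primrec.fst) Primrec.snd))
      (Primrec.const false)
  have hp : Partrec fun a =>
      Nat.rfind fun n => Part.some (((Encodable.decode (α := β) n).map (f a)).getD false) :=
    Partrec.rfind hg.to_comp.partrec₂
  refine hp.dom_re.of_eq fun a => ?_
  refine Nat.rfind_dom.trans ?_
  constructor
  · rintro ⟨n, hn, -⟩
    simp only [Part.mem_some_iff] at hn
    rcases h : Encodable.decode (α := β) n with - | b
    · rw [h] at hn; simp at hn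
    · rw [h] at hn; simp only [Option.map_some, Option.getD_some] at hn
      exact ⟨b, hn.symm⟩
  · rintro ⟨b, hb⟩
    refine ⟨Encodable.encode b, ?_, fun _ => trivial⟩
    simp [Encodable.encodek, hb]

/-- From an r.e. predicate, extract a code whose `evaln` semidecides it. -/
theorem exists_code_re {p : α → Prop} (h : REPred p) :
    ∃ c : Code, ∀ a, p a ↔ ∃ n, (evaln n c (Encodable.encode a)).isSome = true := by
  obtain ⟨c, hc⟩ := Nat.Partrec.Code.exists_code.1 h
  refine ⟨c, fun a => ?_⟩
  have he : eval c (Encodable.encode a)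
      = (Part.assert (p a) fun _ => Part.some ()).map Encodable.encode := by
    rw [hc]; simp [Encodable.encodek]
  constructor
  · intro hp
    have hdom : (eval c (Encodable.encode a)).Dom := by
      rw [he]; exact ⟨hp, trivial⟩
    obtain ⟨x, hx⟩ := Part.dom_iff_mem.1 hdom
    obtain ⟨n, hn⟩ := evaln_complete.1 hx
    exact ⟨n, by simp [Option.isSome_iff_exists, Option.mem_def.1 hn]⟩
  · rintro ⟨n, hn⟩
    rw [Option.isSome_iff_exists] at hn
    obtain ⟨x, hx⟩ := hn
    have hmem : x ∈ eval c (Encodable.encode a) := evaln_complete.2 ⟨n, hx⟩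
    have hdom : (eval c (Encodable.encode a)).Dom := Part.dom_iff_mem.2 ⟨x, hmem⟩
    rw [he] at hdom
    exact hdom.fst

/-! ### Primitive recursiveness of free group word operations -/

/-- One step of `FreeGroup.reduce`, with the condition phrased as a product equality. -/
def rstep (x : Fin k × Bool) (l : List (Fin k × Bool)) : List (Fin k × Bool) :=
  List.casesOn l [x] fun hd tl => if x = (hd.1, !hd.2) then tl else x :: hd :: tl

theorem reduce_eq_foldr (L : List (Fin k × Bool)) :
    FreeGroup.reduce L = L.foldr rstep [] := by
  induction L with
  | nil => rfl
  | cons x L ih =>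
    rw [List.foldr_cons, ← ih, FreeGroup.reduce.cons, rstep]
    cases h : FreeGroup.reduce L with
    | nil => rfl
    | cons hd tl =>
      simp only []
      by_cases hc : x = (hd.1, !hd.2)
      · rw [if_pos hc, if_pos]
        exact ⟨by rw [hc], by rw [hc]⟩
      · rw [if_neg hc, if_neg]
        intro hc'
        exact hc (Prod.ext hc'.1 hc'.2)

theorem primrec_rstep : Primrec₂ (rstep (k := k)) := by
  have : Primrec fun p : (Fin k × Bool) × List (Fin k × Bool) =>
      List.casesOn (motive := fun _ => List (Fin k × Bool)) p.2 [p.1] fun hd tl =>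
        (fun (a : (Fin k × Bool) × List (Fin k × Bool))
             (e : (Fin k × Bool) × List (Fin k × Bool)) =>
          if a.1 = (e.1.1, !e.1.2) then e.2 else a.1 :: e.1 :: e.2) p (hd, tl) :=
    Primrec.list_casesOn Primrec.snd
      (Primrec.list_cons.comp Primrec.fst (Primrec.const []))
      (Primrec.ite
        (Primrec.eq.comp (Primrec.fst.comp Primrec.fst)
          (Primrec.pair (Primrec.fst.comp (Primrec.fst.comp Primrec.snd))
            (Primrec.not.comp (Primrec.snd.comp (Primrec.fst.comp Primrec.snd)))))
        (Primrec.snd.comp Primrec.snd)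
        (Primrec.list_cons.comp (Primrec.fst.comp Primrec.fst)
          (Primrec.list_cons.comp (Primrec.fst.comp Primrec.snd)
            (Primrec.snd.comp Primrec.snd)))).to₂
  refine this.to₂.of_eq fun x l => ?_
  cases l <;> rfl

theorem primrec_reduce : Primrec (FreeGroup.reduce : List (Fin k × Bool) → List (Fin k × Bool)) :=
  (Primrec.list_foldr Primrec.id (Primrec.const [])
    ((primrec_rstep.comp (Primrec.fst.comp Primrec.snd)
      (Primrec.snd.comp Primrec.snd)).to₂)).of_eq
    fun L => (reduce_eq_foldr L).symm

theorem primrec_invRev : Primrec (FreeGroup.invRev : List (Fin k × Bool) → List (Fin k × Bool)) :=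
  (Primrec.list_reverse.comp (Primrec.list_map Primrec.id
    ((Primrec.pair (Primrec.fst.comp Primrec.snd)
      (Primrec.not.comp (Primrec.snd.comp Primrec.snd))).to₂))).of_eq
    fun L => by simp [FreeGroup.invRev]

/-! ### Certificates for membership in a normal closure -/

/-- `entry (u, r, s)` is the word `u * r^{±1} * u⁻¹`. -/
def entry (e : List (Fin k × Bool) × List (Fin k × Bool) × Bool) : List (Fin k × Bool) :=
  e.1 ++ (bif e.2.2 then e.2.1 else FreeGroup.invRev e.2.1) ++ FreeGroup.invRev e.1

theorem primrec_entry : Primrec (entry (k := k)) :=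
  Primrec.list_append.comp
    (Primrec.list_append.comp Primrec.fst
      (Primrec.cond (Primrec.snd.comp Primrec.snd) (Primrec.fst.comp Primrec.snd)
        (primrec_invRev.comp (Primrec.fst.comp Primrec.snd))))
    (primrec_invRev.comp Primrec.fst)

theorem mk_invRev (L : List (Fin k × Bool)) :
    FreeGroup.mk (FreeGroup.invRev L) = (FreeGroup.mk L)⁻¹ :=
  (FreeGroup.inv_mk).symm

theorem mk_entry (e : List (Fin k × Bool) × List (Fin k × Bool) × Bool) :
    FreeGroup.mk (entry e)
      = FreeGroup.mk e.1 * FreeGroup.mk (bif e.2.2 then e.2.1 else FreeGroup.invRev e.2.1)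
        * (FreeGroup.mk e.1)⁻¹ := by
  rw [entry, ← FreeGroup.mul_mk, ← FreeGroup.mul_mk, mk_invRev]

theorem mk_flatten (L : List (List (Fin k × Bool))) :
    FreeGroup.mk L.flatten = (L.map FreeGroup.mk).prod := by
  induction L with
  | nil => rfl
  | cons x L ih => rw [List.flatten_cons, ← FreeGroup.mul_mk, List.map_cons, List.prod_cons, ih]

/-- The master lemma: membership of a (primrec) target word in the normal closure of a
uniformly r.e. family of relator sets is r.e. -/
theorem re_mem_normalClosure {S : α → Set (FreeGroup (Fin k))} {t : α → List (Fin k × Bool)}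
    (ht : Primrec t)
    (hS : REPred fun p : α × List (Fin k × Bool) => FreeGroup.mk p.2 ∈ S p.1) :
    REPred fun a => FreeGroup.mk (t a) ∈ Subgroup.normalClosure (S a) := by
  obtain ⟨c, hc⟩ := exists_code_re hS
  -- the boolean verifier
  set f : α → (List (List (Fin k × Bool) × List (Fin k × Bool) × Bool) × ℕ) → Bool :=
    fun a Ln =>
      (Ln.1.all fun e => (evaln Ln.2 c (Encodable.encode (a, e.2.1))).isSome) &&
      decide (FreeGroup.reduce (t a) = FreeGroup.reduce (Ln.1.map entry).flatten) with hfdef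
  have hall : Primrec fun p : α × (List (List (Fin k × Bool) × List (Fin k × Bool) × Bool) × ℕ) =>
      p.2.1.all fun e => (evaln p.2.2 c (Encodable.encode (p.1, e.2.1))).isSome := by
    have hstep : Primrec₂ fun
        (p : α × (List (List (Fin k × Bool) × List (Fin k × Bool) × Bool) × ℕ))
        (q : (List (Fin k × Bool) × List (Fin k × Bool) × Bool) × Bool) =>
        ((evaln p.2.2 c (Encodable.encode (p.1, q.1.2.1))).isSome && q.2) :=
      Primrec.and.comp
        (Primrec.option_isSome.comp
          (primrec_evaln.comp (Primrec.pair
            (Primrec.pair (Primrec.snd.comp (Primrec.snd.comp Primrec.fst)) (Primrec.const c))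
            (Primrec.encode.comp (Primrec.pair (Primrec.fst.comp Primrec.fst)
              (Primrec.fst.comp (Primrec.snd.comp (Primrec.fst.comp Primrec.snd))))))))
        (Primrec.snd.comp Primrec.snd)
    refine (Primrec.list_foldr (Primrec.fst.comp Primrec.snd) (Primrec.const true)
      hstep).of_eq fun p => ?_
    induction p.2.1 with
    | nil => rfl
    | cons x L ih => rw [List.foldr_cons, ih, List.all_cons]
  have hfp : Primrec₂ f := by
    refine (Primrec.and.comp hall (Primrec.eq.comp
      (primrec_reduce.comp (ht.comp Primrec.fst))
      (primrec_reduce.comp (Primrec.list_flatten.comp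
        (Primrec.list_map (Primrec.fst.comp Primrec.snd)
          (primrec_entry.comp Primrec.snd).to₂)))).decide).to₂
  have hre := rePred_of_exists hfp
  refine hre.of_eq fun a => ?_
  constructor
  · rintro ⟨⟨L, n⟩, hb⟩
    rw [hfdef] at hb
    simp only [Bool.and_eq_true, decide_eq_true_eq, List.all_eq_true] at hb
    obtain ⟨h1, h2⟩ := hb
    have hmem : ∀ e ∈ L, FreeGroup.mk (entry e) ∈ Subgroup.normalClosure (S a) := by
      intro e he
      have hr : FreeGroup.mk e.2.1 ∈ S a := (hc (a, e.2.1)).2 ⟨n, h1 e he⟩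
      have hr' : FreeGroup.mk e.2.1 ∈ Subgroup.normalClosure (S a) :=
        Subgroup.subset_normalClosure hr
      have hmid : FreeGroup.mk (bif e.2.2 then e.2.1 else FreeGroup.invRev e.2.1)
          ∈ Subgroup.normalClosure (S a) := by
        cases hb2 : e.2.2
        · rw [cond_false, mk_invRev]; exact inv_mem hr'
        · rw [cond_true]; exact hr'
      rw [mk_entry e]
      exact Subgroup.normalClosure_normal.conj_mem _ hmid _
    have heq : FreeGroup.mk (t a) = FreeGroup.mk (L.map entry).flatten :=
      FreeGroup.reduce.exact h2
    rw [heq, mk_flatten, List.map_map]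
    exact list_prod_mem fun x hx => by
      obtain ⟨e, he, rfl⟩ := List.mem_map.1 hx
      exact hmem e he
  · intro hmem
    rw [Subgroup.normalClosure] at hmem
    have hmem' : FreeGroup.mk (t a) ∈ Submonoid.closure
        (Group.conjugatesOfSet (S a) ∪ (Group.conjugatesOfSet (S a))⁻¹) := by
      rw [← Subgroup.closure_toSubmonoid]; exact hmem
    obtain ⟨l, hl, hprod⟩ := Submonoid.exists_list_of_mem_closure hmem'
    -- build entries for every element of `l`
    have hentry : ∀ y ∈ l, ∃ e : List (Fin k × Bool) × List (Fin k × Bool) × Bool,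
        FreeGroup.mk (entry e) = y ∧ FreeGroup.mk e.2.1 ∈ S a := by
      intro y hy
      rcases hl y hy with hy' | hy'
      · obtain ⟨z, hz, hconj⟩ := Group.mem_conjugatesOfSet_iff.1 hy'
        obtain ⟨g, hg⟩ := isConj_iff.1 hconj
        refine ⟨(g.toWord, z.toWord, true), ?_, by rw [FreeGroup.mk_toWord]; exact hz⟩
        rw [mk_entry]
        simp only [cond_true, FreeGroup.mk_toWord]
        exact hg
      · rw [Set.mem_inv] at hy'
        obtain ⟨z, hz, hconj⟩ := Group.mem_conjugatesOfSet_iff.1 hy'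
        obtain ⟨g, hg⟩ := isConj_iff.1 hconj
        refine ⟨(g.toWord, z.toWord, false), ?_, by rw [FreeGroup.mk_toWord]; exact hz⟩
        rw [mk_entry]
        simp only [cond_false, mk_invRev, FreeGroup.mk_toWord]
        rw [← inv_inv y, ← hg]; group
    have hL : ∃ L : List (List (Fin k × Bool) × List (Fin k × Bool) × Bool),
        (L.map fun e => FreeGroup.mk (entry e)) = l ∧
        ∀ e ∈ L, FreeGroup.mk e.2.1 ∈ S a := by
      clear hprod
      induction l with
      | nil => exact ⟨[], rfl, nofun⟩
      | cons y l ih =>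
        obtain ⟨e, he1, he2⟩ := hentry y (List.mem_cons_self)
        obtain ⟨L, hL1, hL2⟩ := ih (fun z hz => hl z (List.mem_cons_of_mem _ hz))
          (fun z hz => hentry z (List.mem_cons_of_mem _ hz))
        exact ⟨e :: L, by rw [List.map_cons, he1, hL1], fun x hx => by
          rcases List.mem_cons.1 hx with rfl | hx
          · exact he2
          · exact hL2 x hx⟩
    obtain ⟨L, hL1, hL2⟩ := hL
    -- find a uniform bound for evaln
    have hbound : ∃ n, ∀ e ∈ L, (evaln n c (Encodable.encode (a, e.2.1))).isSome = true := by
      clear hL1 hprod hl hentry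
      induction L with
      | nil => exact ⟨0, nofun⟩
      | cons x L ih =>
        obtain ⟨n1, hn1⟩ := ih fun e he => hL2 e (List.mem_cons_of_mem _ he)
        obtain ⟨n2, hn2⟩ := (hc (a, x.2.1)).1 (hL2 x (List.mem_cons_self))
        refine ⟨max n1 n2, fun e he => ?_⟩
        rcases List.mem_cons.1 he with rfl | he
        · obtain ⟨v, hv⟩ := Option.isSome_iff_exists.1 hn2
          exact Option.isSome_iff_exists.2 ⟨v, evaln_mono (le_max_right _ _) hv⟩
        · obtain ⟨v, hv⟩ := Option.isSome_iff_exists.1 (hn1 e he)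
          exact Option.isSome_iff_exists.2 ⟨v, evaln_mono (le_max_left _ _) hv⟩
    obtain ⟨n, hn⟩ := hbound
    refine ⟨(L, n), ?_⟩
    rw [hfdef]
    simp only [Bool.and_eq_true, decide_eq_true_eq, List.all_eq_true]
    refine ⟨hn, ?_⟩
    apply FreeGroup.reduce.sound
    rw [mk_flatten, List.map_map]
    show FreeGroup.mk (t a) = (L.map fun e => FreeGroup.mk (entry e)).prod
    rw [hL1, hprod]

/-- Composition of an r.e. predicate with a computable function. -/
theorem RePred.comp' {β : Type*} [Primcodable β] {p : β → Prop} (hp : REPred p)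
    {f : α → β} (hf : Computable f) : REPred fun a => p (f a) :=
  Partrec.comp hp hf

end Kuznetsov

open Kuznetsov Encodable FreeGroup
open Nat.Partrec (Code)
open Nat.Partrec.Code

/-- Kuznetsov's theorem: a finitely generated, recursively presented simple group
has decidable word problem. -/
theorem stmt_8 {k : ℕ} (R : Set (FreeGroup (Fin k)))
    (hR : REPred (fun w : List (Fin k × Bool) => FreeGroup.mk w ∈ R))
    (hsimple : IsSimpleGroup (FreeGroup (Fin k) ⧸ Subgroup.normalClosure R)) :
    ComputablePred (fun w : List (Fin k × Bool) =>
      FreeGroup.mk w ∈ Subgroup.normalClosure R) := by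
  classical
  set N := Subgroup.normalClosure R with hN
  -- the positive side
  have hpos : REPred fun w : List (Fin k × Bool) => FreeGroup.mk w ∈ N := by
    have := re_mem_normalClosure (S := fun _ : List (Fin k × Bool) => R) (t := id)
      Primrec.id (hS := RePred.comp' hR Computable.snd)
    exact this
  -- a word representing a nontrivial element
  obtain ⟨g, hg⟩ := exists_ne (1 : FreeGroup (Fin k) ⧸ N)
  obtain ⟨x, rfl⟩ := QuotientGroup.mk'_surjective N g
  have hx : x ∉ N := by
    intro h
    exact hg ((QuotientGroup.eq_one_iff x).2 h)
  -- key equivalence via simplicity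
  have hkey : ∀ w : List (Fin k × Bool),
      ¬ FreeGroup.mk w ∈ N ↔
        FreeGroup.mk x.toWord ∈ Subgroup.normalClosure (R ∪ {FreeGroup.mk w}) := by
    intro w
    constructor
    · intro hw
      set N' := Subgroup.normalClosure (R ∪ {FreeGroup.mk w}) with hN'
      set π : FreeGroup (Fin k) →* FreeGroup (Fin k) ⧸ N := QuotientGroup.mk' N with hπ
      have hmap : N'.map π = Subgroup.normalClosure (π '' (R ∪ {FreeGroup.mk w})) :=
        Subgroup.map_normalClosure _ _ (QuotientGroup.mk'_surjective N)
    -- the image is a nontrivial normal subgroup, hence ⊤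
      have hwmem : π (FreeGroup.mk w) ∈ N'.map π :=
        Subgroup.mem_map_of_mem _ (Subgroup.subset_normalClosure (Set.mem_union_right _ rfl))
      have hwne : π (FreeGroup.mk w) ≠ 1 := by
        intro h
        exact hw ((QuotientGroup.eq_one_iff _).1 h)
      have hnormal : (N'.map π).Normal := by
        rw [hmap]; infer_instance
      rcases hnormal.eq_bot_or_eq_top with hbot | htop
      · rw [hbot] at hwmem
        exact absurd (Subgroup.mem_bot.1 hwmem) hwne
      · have hxmem : π x ∈ N'.map π := by rw [htop]; trivial
        obtain ⟨y, hy, hyx⟩ := hxmem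
        have : y⁻¹ * x ∈ N := by
          rw [← QuotientGroup.ker_mk' N]
          show π (y⁻¹ * x) = 1
          rw [MonoidHom.map_mul, MonoidHom.map_inv, hyx, inv_mul_cancel]
        have hxN' : x ∈ N' := by
          have hNN' : N ≤ N' :=
            Subgroup.normalClosure_mono (Set.subset_union_left)
          have := mul_mem hy (hNN' this)
          rwa [mul_inv_cancel_left] at this
        rwa [FreeGroup.mk_toWord]
    · intro hmem hw
      have hle : Subgroup.normalClosure (R ∪ {FreeGroup.mk w}) ≤ N := by
        apply Subgroup.normalClosure_le_normal
        intro z hz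
        rcases hz with hz | hz
        · exact Subgroup.subset_normalClosure hz
        · rw [Set.mem_singleton_iff] at hz; rw [hz]; exact hw
      rw [FreeGroup.mk_toWord] at hmem
      exact hx (hle hmem)
  -- the negative side is r.e.
  have hneg : REPred fun w : List (Fin k × Bool) => ¬ FreeGroup.mk w ∈ N := by
    -- uniform r.e. of the relator family R ∪ {mk w}
    obtain ⟨c, hc⟩ := exists_code_re hR
    have hSre : REPred fun p : List (Fin k × Bool) × List (Fin k × Bool) =>
        FreeGroup.mk p.2 ∈ R ∪ {FreeGroup.mk p.1} := by
      have hf : Primrec₂ fun (p : List (Fin k × Bool) × List (Fin k × Bool)) (n : ℕ) =>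
          ((evaln n c (Encodable.encode p.2)).isSome ||
            decide (FreeGroup.reduce p.2 = FreeGroup.reduce p.1)) :=
        Primrec.or.comp
          (Primrec.option_isSome.comp (primrec_evaln.comp (Primrec.pair
            (Primrec.pair Primrec.snd (Primrec.const c))
            (Primrec.encode.comp (Primrec.snd.comp Primrec.fst)))))
          (Primrec.eq.comp (primrec_reduce.comp (Primrec.snd.comp Primrec.fst))
            (primrec_reduce.comp (Primrec.fst.comp Primrec.fst))).decide
      refine (rePred_of_exists hf).of_eq fun p => ?_
      simp only [Bool.or_eq_true, decide_eq_true_eq]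
      constructor
      · rintro ⟨n, h | h⟩
        · exact Set.mem_union_left _ ((hc p.2).2 ⟨n, h⟩)
        · exact Set.mem_union_right _ (FreeGroup.reduce.exact h)
      · rintro (h | h)
        · obtain ⟨n, hn⟩ := (hc p.2).1 h
          exact ⟨n, Or.inl hn⟩
        · rw [Set.mem_singleton_iff] at h
          exact ⟨0, Or.inr (FreeGroup.reduce.sound h)⟩
    have := re_mem_normalClosure (S := fun w : List (Fin k × Bool) => R ∪ {FreeGroup.mk w})
      (t := fun _ => x.toWord) (Primrec.const _) hSre
    exact this.of_eq fun w => (hkey w).symm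
  exact ComputablePred.computable_iff_re_compl_re'.2 ⟨hpos, hneg⟩
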